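/- The men-optimal stable matching is women-pessimal: for every woman w and every stable matching μ, w weakly prefers μ(w) to her partner in the men-optimal stable matching. -/
import Mathlib


open Finset

/-- A stable matching instance: `n` men and `n` women; `mrank m w` is the
(0-indexed) rank of woman `w` in man `m`'s strict preference list (lower = more
preferred); `wrank w m` analogously. -/
structure SMInstance (n : ℕ) where
  mrank : Fin n → Fin n → Fin n
  wrank : Fin n → Fin n → Fin n
  mbij : ∀ m, Function.Bijective (mrank m)
  wbij : ∀ w, Function.Bijective (wrank w)

namespace SMInstance

variable {n : ℕ}

/-- `(m, w)` is a blocking pair of the perfect matching `μ`. -/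
def Blocking (I : SMInstance n) (μ : Equiv.Perm (Fin n)) (m w : Fin n) : Prop :=
  μ m ≠ w ∧ I.mrank m w < I.mrank m (μ m) ∧ I.wrank w m < I.wrank w (μ.symm w)

/-- A matching is stable if it admits no blocking pair. -/
def Stable (I : SMInstance n) (μ : Equiv.Perm (Fin n)) : Prop :=
  ∀ m w, ¬ I.Blocking μ m w

/-- Total (1-indexed) rank of partners over men. -/
def SM (I : SMInstance n) (μ : Equiv.Perm (Fin n)) : ℤ :=
  ∑ m : Fin n, (((I.mrank m (μ m) : ℕ) : ℤ) + 1)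

/-- Total (1-indexed) rank of partners over women. -/
def SW (I : SMInstance n) (μ : Equiv.Perm (Fin n)) : ℤ :=
  ∑ w : Fin n, (((I.wrank w (μ.symm w) : ℕ) : ℤ) + 1)

/-- The sex-equality cost of a matching. -/
def cost (I : SMInstance n) (μ : Equiv.Perm (Fin n)) : ℤ :=
  |I.SM μ - I.SW μ|

end SMInstance

/-- the men-optimal stable matching is women-pessimal: every woman
weakly prefers her partner in any stable matching to her partner in the
men-optimal stable matching. -/
theorem men_optimal_is_women_pessimal {n : ℕ} (I : SMInstance n)
    (μM : Equiv.Perm (Fin n)) (hM : I.Stable μM)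
    (hopt : ∀ μ : Equiv.Perm (Fin n), I.Stable μ → ∀ m : Fin n,
      I.mrank m (μM m) ≤ I.mrank m (μ m)) :
    ∀ w : Fin n, ∀ μ : Equiv.Perm (Fin n), I.Stable μ →
      I.wrank w (μ.symm w) ≤ I.wrank w (μM.symm w) := by
  intro w μ hμ
  by_contra hlt
  push_neg at hlt
  set m := μM.symm w with hm
  have hMw : μM m = w := μM.apply_symm_apply w
  have hne : μ m ≠ w := by
    intro h
    have : μ.symm w = m := by rw [← h, Equiv.symm_apply_apply]
    rw [this] at hlt
    exact lt_irrefl _ hlt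
  have h1 : I.mrank m w < I.mrank m (μ m) := by
    have := hopt μ hμ m
    rw [hMw] at this
    rcases lt_or_eq_of_le this with h | h
    · exact h
    · exact absurd ((I.mbij m).1 h.symm ▸ rfl : μ m = w) hne
  exact hμ m w ⟨hne, h1, hlt⟩
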